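/- Let n ≥ 2 and let i = √−1 ∈ ℂ. Define the four maps ρ₁, ρ₂, ρ₃, ρ₄ : Mₙ(ℂ) → Mₙ(ℂ) by ρ₁(x) = x, ρ₂(x) = −x, ρ₃(x) = i·xᵀ, ρ₄(x) = −i·xᵀ. Then these four representations are pairwise inequivalent: for every pair k ≠ l from {1,2,3,4} there is no invertible matrix T ∈ Mₙ(ℂ) with ρ_k(x) = T⁻¹ * ρ_l(x) * T for all x ∈ Mₙ(ℂ). -/

import Mathlib

open Matrix

/-- The four representations `ρ₁(x) = x`, `ρ₂(x) = -x`, `ρ₃(x) = i·xᵀ`, `ρ₄(x) = -i·xᵀ`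
of the anti-Jordan triple system of `n × n` complex matrices. -/
noncomputable def rho (n : ℕ) :
    Fin 4 → Matrix (Fin n) (Fin n) ℂ → Matrix (Fin n) (Fin n) ℂ :=
  ![fun x => x, fun x => -x, fun x => Complex.I • xᵀ, fun x => (-Complex.I) • xᵀ]

noncomputable def rhoScalar : Fin 4 → ℂ := ![1, -1, Complex.I, -Complex.I]

lemma rho_one (n : ℕ) (k : Fin 4) :
    rho n k 1 = rhoScalar k • (1 : Matrix (Fin n) (Fin n) ℂ) := by
  fin_cases k <;> simp [rho, rhoScalar, Matrix.transpose_one]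

lemma rhoScalar_inj (k l : Fin 4) (h : rhoScalar k = rhoScalar l) : k = l := by
  fin_cases k <;> fin_cases l <;>
    simp_all [rhoScalar, Complex.ext_iff] <;> norm_num at h

/-- For `n ≥ 2`, the four representations `ρ₁, ρ₂, ρ₃, ρ₄` are pairwise inequivalent:
for `k ≠ l` there is no invertible matrix `T` with `ρ_k(x) = T⁻¹ * ρ_l(x) * T` for all `x`. -/
theorem rho_pairwise_inequivalent (n : ℕ) (hn : 2 ≤ n) (k l : Fin 4) (hkl : k ≠ l) :
    ¬ ∃ T : Matrix (Fin n) (Fin n) ℂ, IsUnit T ∧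
      ∀ x : Matrix (Fin n) (Fin n) ℂ, rho n k x = T⁻¹ * rho n l x * T := by
  haveI : NeZero n := ⟨by omega⟩
  rintro ⟨T, hT, h⟩
  have h1 := h 1
  rw [rho_one, rho_one] at h1
  rw [Matrix.mul_smul, Matrix.smul_mul, mul_one,
    Matrix.nonsing_inv_mul T (Matrix.isUnit_iff_isUnit_det T |>.mp hT)] at h1
  have : rhoScalar k = rhoScalar l := by
    have := congrFun (congrFun h1 ⟨0, by omega⟩) ⟨0, by omega⟩
    simpa [Matrix.one_apply] using this
  exact hkl (rhoScalar_inj k l this)
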